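/- Let 0 < λ_1 < λ_2 and b_1, b_2 > 0, and define x_1 = ln( b_1·b_2·(λ_2−λ_1)^2 / (b_1·λ_1^2 + b_2·λ_2^2 + λ_1·λ_2·(b_1+b_2)) ), m_1 = (λ_1+λ_2)·(b_1·λ_1+b_2·λ_2)^2 / ( λ_1·λ_2·( (b_1·λ_1+b_2·λ_2)^2 + λ_1·λ_2·(b_1+b_2)^2 ) ), x_2 = ln(b_1+b_2), and m_2 = (b_1+b_2)^2·(λ_1+λ_2) / ( (b_1·λ_1+b_2·λ_2)^2 + λ_1·λ_2·(b_1+b_2)^2 ). Then m_1 > 0, m_2 > 0, x_1 < x_2, and the first component A(z) of the vector (A(z),B(z),C(z))^T = S(x_2,m_2;z)·S(x_1,m_1;z)·(1,0,0)^T satisfies A(z) = (1 − z/λ_1)·(1 − z/λ_2) for all real z. -/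

import Mathlib

set_option maxHeartbeats 2000000


open Matrix

/-- The 3×3 matrix `S(x,m;z) = I − z·m·v(x)·w(x)ᵀ` with
`v(x) = (e^{−x}, −2, e^{x})ᵀ` and `w(x) = (e^{x}, 1, e^{−x})ᵀ`. -/
noncomputable def Speak (x m z : ℝ) : Matrix (Fin 3) (Fin 3) ℝ :=
  1 - (z * m) • vecMulVec ![Real.exp (-x), -2, Real.exp x] ![Real.exp x, 1, Real.exp (-x)]

theorem two_peakon_A (lam₁ lam₂ b₁ b₂ x₁ x₂ m₁ m₂ : ℝ)
    (h₁ : 0 < lam₁) (h₁₂ : lam₁ < lam₂) (hb₁ : 0 < b₁) (hb₂ : 0 < b₂)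
    (hx₁ : x₁ = Real.log (b₁ * b₂ * (lam₂ - lam₁) ^ 2 /
      (b₁ * lam₁ ^ 2 + b₂ * lam₂ ^ 2 + lam₁ * lam₂ * (b₁ + b₂))))
    (hm₁ : m₁ = (lam₁ + lam₂) * (b₁ * lam₁ + b₂ * lam₂) ^ 2 /
      (lam₁ * lam₂ * ((b₁ * lam₁ + b₂ * lam₂) ^ 2 + lam₁ * lam₂ * (b₁ + b₂) ^ 2)))
    (hx₂ : x₂ = Real.log (b₁ + b₂))
    (hm₂ : m₂ = (b₁ + b₂) ^ 2 * (lam₁ + lam₂) /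
      ((b₁ * lam₁ + b₂ * lam₂) ^ 2 + lam₁ * lam₂ * (b₁ + b₂) ^ 2)) :
    0 < m₁ ∧ 0 < m₂ ∧ x₁ < x₂ ∧
    ∀ z : ℝ, (Speak x₂ m₂ z * Speak x₁ m₁ z).mulVec ![1, 0, 0] 0
      = (1 - z / lam₁) * (1 - z / lam₂) := by
  have h₂ : 0 < lam₂ := h₁.trans h₁₂
  have hL : 0 < (lam₂ - lam₁) ^ 2 := pow_pos (sub_pos.2 h₁₂) 2
  have hN : 0 < b₁ * b₂ * (lam₂ - lam₁) ^ 2 := mul_pos (mul_pos hb₁ hb₂) hL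
  have hD : 0 < b₁ * lam₁ ^ 2 + b₂ * lam₂ ^ 2 + lam₁ * lam₂ * (b₁ + b₂) := by positivity
  have hK : 0 < (b₁ * lam₁ + b₂ * lam₂) ^ 2 + lam₁ * lam₂ * (b₁ + b₂) ^ 2 := by positivity
  have hb : 0 < b₁ + b₂ := by positivity
  have hE1 : Real.exp x₁ = b₁ * b₂ * (lam₂ - lam₁) ^ 2 /
      (b₁ * lam₁ ^ 2 + b₂ * lam₂ ^ 2 + lam₁ * lam₂ * (b₁ + b₂)) := by
    rw [hx₁, Real.exp_log (by positivity)]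
  have hE2 : Real.exp x₂ = b₁ + b₂ := by rw [hx₂, Real.exp_log hb]
  refine ⟨by rw [hm₁]; positivity, by rw [hm₂]; positivity, ?_, ?_⟩
  · rw [hx₁, hx₂]
    apply Real.log_lt_log (by positivity)
    rw [div_lt_iff₀ hD]
    nlinarith [sq_nonneg (b₁ * lam₁ + b₂ * lam₂), mul_pos (mul_pos h₁ h₂) (pow_pos hb 2)]
  · intro z
    simp only [Speak, Matrix.one_fin_three, Matrix.mulVec, Matrix.mul_apply, dotProduct,
      Fin.sum_univ_three, Matrix.sub_apply, Matrix.smul_apply, vecMulVec_apply,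
      Matrix.cons_val_zero, Matrix.cons_val_one, Matrix.head_cons, Matrix.cons_val_two,
      Matrix.tail_cons, smul_eq_mul]
    norm_num [Matrix.vecHead, Matrix.vecTail, Function.comp_def]
    rw [Real.exp_neg, Real.exp_neg, hE1, hE2]
    have h1 : lam₁ ≠ 0 := h₁.ne'
    have h2 : lam₂ ≠ 0 := h₂.ne'
    rw [hm₁, hm₂]
    have h3 : lam₂ - lam₁ ≠ 0 := (sub_pos.2 h₁₂).ne'
    simp only [Matrix.cons_val]
    field_simp
    ring
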